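/- arXiv:2007.07251 — 3 statements merged into one kernel-verified Lean document; each statement's English description precedes it below -/
import Mathlib

section
/- Let (A, μ) be an associative algebra and r = Σᵢ uᵢ⊗vᵢ ∈ A⊗A a solution of the associative Yang–Baxter equation A(r) = Σᵢ,ⱼ (uᵢuⱼ⊗vⱼ⊗vᵢ − uᵢ⊗vᵢuⱼ⊗vⱼ + uᵢ⊗uⱼ⊗vⱼvᵢ) = 0. If r is antisymmetric (τ(r) = −r) or symmetric (τ(r) = r), then r satisfies the classical Yang–Baxter equation in the Lie algebra A⁻ (with bracket [x,y] = xy − yx): [[r,r]] = Σᵢ,ⱼ ([uⱼ,uᵢ]⊗vⱼ⊗vᵢ − uᵢ⊗[uⱼ,vᵢ]⊗vⱼ − uᵢ⊗uⱼ⊗[vⱼ,vᵢ]) = 0. -/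
open TensorProduct

section aux
set_option linter.unusedSectionVars false
variable (k A : Type*) [Field k] [NonUnitalRing A] [Module k A]
  [SMulCommClass k A A] [IsScalarTower k A A]

/-- Multiplication as a linear map on the tensor square. -/
noncomputable def mulMap : A ⊗[k] A →ₗ[k] A := TensorProduct.lift (LinearMap.mul k A)

@[simp] lemma mulMap_tmul (a b : A) : mulMap k A (a ⊗ₜ[k] b) = a * b := rfl

/-- The bilinear AYBE expression `A(r)` as a linear map on `(A⊗A)⊗(A⊗A)`:
`(a⊗b)⊗(c⊗d) ↦ ac⊗d⊗b − a⊗bc⊗d + a⊗c⊗db`, so that it sends `r ⊗ r` to `A(r)`. -/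
noncomputable def PhiMap : (A ⊗[k] A) ⊗[k] (A ⊗[k] A) →ₗ[k] A ⊗[k] (A ⊗[k] A) :=
  (TensorProduct.map (mulMap k A) (TensorProduct.comm k A A).toLinearMap).comp
      (tensorTensorTensorComm k A A A A).toLinearMap
  - (TensorProduct.assoc k A A A).toLinearMap ∘ₗ
      LinearMap.rTensor A (LinearMap.lTensor A (mulMap k A)) ∘ₗ
      LinearMap.rTensor A (TensorProduct.assoc k A A A).toLinearMap ∘ₗ
      (TensorProduct.assoc k (A ⊗[k] A) A A).symm.toLinearMap
  + (TensorProduct.assoc k A A A).toLinearMap ∘ₗ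
      (TensorProduct.map LinearMap.id ((mulMap k A) ∘ₗ (TensorProduct.comm k A A).toLinearMap)) ∘ₗ
      (tensorTensorTensorComm k A A A A).toLinearMap

@[simp] lemma PhiMap_tmul (a b c d : A) :
    PhiMap k A ((a ⊗ₜ[k] b) ⊗ₜ[k] (c ⊗ₜ[k] d)) =
      (a * c) ⊗ₜ[k] (d ⊗ₜ[k] b) - a ⊗ₜ[k] ((b * c) ⊗ₜ[k] d) + a ⊗ₜ[k] (c ⊗ₜ[k] (d * b)) := by
  simp [PhiMap]

/-- The permutation `σ₁₃` of the first and third tensor factors on `A⊗A⊗A`. -/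
noncomputable def PermMap : A ⊗[k] (A ⊗[k] A) →ₗ[k] A ⊗[k] (A ⊗[k] A) :=
  (TensorProduct.leftComm k A A A).toLinearMap ∘ₗ
    LinearMap.lTensor A (TensorProduct.comm k A A).toLinearMap ∘ₗ
    (TensorProduct.leftComm k A A A).toLinearMap

@[simp] lemma PermMap_tmul (x y z : A) :
    PermMap k A (x ⊗ₜ[k] (y ⊗ₜ[k] z)) = z ⊗ₜ[k] (y ⊗ₜ[k] x) := by
  simp [PermMap]

end aux

/-- If `r = Σᵢ uᵢ⊗vᵢ` is a symmetric or antisymmetric solution of the associative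
Yang–Baxter equation `A(r) = 0` in an associative algebra `A`, then `r` satisfies the
classical Yang–Baxter equation `[[r,r]] = 0` in the Lie algebra `A⁻`. -/
theorem aybe_to_cybe
    {k A : Type*} [Field k] [NonUnitalRing A] [Module k A]
    [SMulCommClass k A A] [IsScalarTower k A A]
    {ι : Type*} [Fintype ι] (u v : ι → A)
    (hsym : (TensorProduct.comm k A A) (∑ i, u i ⊗ₜ[k] v i) = ∑ i, u i ⊗ₜ[k] v i ∨
      (TensorProduct.comm k A A) (∑ i, u i ⊗ₜ[k] v i) = -∑ i, u i ⊗ₜ[k] v i)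
    (hAYBE : (∑ i, ∑ j, (u i * u j) ⊗ₜ[k] (v j ⊗ₜ[k] v i))
        - (∑ i, ∑ j, u i ⊗ₜ[k] ((v i * u j) ⊗ₜ[k] v j))
        + (∑ i, ∑ j, u i ⊗ₜ[k] (u j ⊗ₜ[k] (v j * v i))) = 0) :
    (∑ i, ∑ j, (u j * u i - u i * u j) ⊗ₜ[k] (v j ⊗ₜ[k] v i))
      - (∑ i, ∑ j, u i ⊗ₜ[k] ((u j * v i - v i * u j) ⊗ₜ[k] v j))
      - (∑ i, ∑ j, u i ⊗ₜ[k] (u j ⊗ₜ[k] (v j * v i - v i * v j))) = 0 := by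
  set r : A ⊗[k] A := ∑ i, u i ⊗ₜ[k] v i with hr
  set s : A ⊗[k] A := ∑ i, v i ⊗ₜ[k] u i with hs
  have hcomm : (TensorProduct.comm k A A) r = s := by
    rw [hr, map_sum]; simp [hs]
  -- expansion of Φ applied to a tensor of sums of pure tensors
  have expand : ∀ (a b c d : ι → A),
      PhiMap k A ((∑ i, a i ⊗ₜ[k] b i) ⊗ₜ[k] (∑ j, c j ⊗ₜ[k] d j)) =
        (∑ i, ∑ j, (a i * c j) ⊗ₜ[k] (d j ⊗ₜ[k] b i))
        - (∑ i, ∑ j, a i ⊗ₜ[k] ((b i * c j) ⊗ₜ[k] d j))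
        + (∑ i, ∑ j, a i ⊗ₜ[k] (c j ⊗ₜ[k] (d j * b i))) := by
    intro a b c d
    rw [sum_tmul, map_sum]
    simp_rw [tmul_sum, map_sum, PhiMap_tmul]
    simp_rw [Finset.sum_add_distrib, Finset.sum_sub_distrib]
  -- Φ(r⊗r) = A(r) = 0
  have h1 : PhiMap k A (r ⊗ₜ[k] r) = 0 := by
    rw [hr, expand u v u v]; exact hAYBE
  -- τ(r)⊗τ(r) = r⊗r in either the symmetric or antisymmetric case
  have hss : s ⊗ₜ[k] s = r ⊗ₜ[k] r := by
    rcases hsym with h | h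
    · rw [hcomm] at h; rw [h]
    · rw [hcomm] at h; rw [h, neg_tmul, tmul_neg, neg_neg]
  have h2 : PhiMap k A (s ⊗ₜ[k] s) = 0 := by rw [hss, h1]
  -- apply σ₁₃ to A(τ(r)) = 0
  have h3 : PermMap k A (PhiMap k A (s ⊗ₜ[k] s)) = 0 := by rw [h2, map_zero]
  rw [hs, expand v u v u] at h3
  rw [map_add, map_sub] at h3
  simp_rw [map_sum, PermMap_tmul] at h3
  -- reindex the middle term
  have hmid : (∑ i, ∑ j, (u j) ⊗ₜ[k] ((u i * v j) ⊗ₜ[k] (v i)))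
      = ∑ i, ∑ j, u i ⊗ₜ[k] ((u j * v i) ⊗ₜ[k] v j) := Finset.sum_comm
  rw [hmid] at h3
  -- expand the brackets in the goal and conclude: goal = σ₁₃(A(τ r)) − A(r)
  simp only [sub_tmul, tmul_sub, Finset.sum_sub_distrib]
  have key := congrArg₂ (· - ·) h3 hAYBE
  simp only [sub_zero] at key
  rw [← key]
  abel
end

section
/- Let (A, μ) be an associative algebra and r ∈ A⊗A with Δ_r(a) = a·r − r·a as above. Then (Δ_r⊗id)∘Δ_r(a) − (id⊗Δ_r)∘Δ_r(a) = a·A(r) − A(r)·a for all a ∈ A, where A⊗A⊗A carries the bimodule structure a·(x⊗y⊗z) = ax⊗y⊗z, (x⊗y⊗z)·a = x⊗y⊗za, and A(r) = Σ uᵢuⱼ⊗vⱼ⊗vᵢ − Σ uᵢ⊗vᵢuⱼ⊗vⱼ + Σ uᵢ⊗uⱼ⊗vⱼvᵢ. Consequently Δ_r is coassociative if and only if a·A(r) = A(r)·a for all a ∈ A. -/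
open TensorProduct

/-- For `Δ_r(a) = a·r − r·a` with `r = Σᵢ uᵢ⊗vᵢ`:
`(Δ_r⊗id)Δ_r(a) − (id⊗Δ_r)Δ_r(a) = a·A(r) − A(r)·a`, and consequently `Δ_r` is
coassociative iff `a·A(r) = A(r)·a` for all `a`. -/
theorem coassoc_defect_eq_aybe_defect
    {k A : Type*} [Field k] [NonUnitalRing A] [Module k A]
    [SMulCommClass k A A] [IsScalarTower k A A]
    {ι : Type*} [Fintype ι] (u v : ι → A)
    (D : A →ₗ[k] A ⊗[k] A)
    (hD : ∀ a, D a =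
      TensorProduct.map (LinearMap.mulLeft k a) LinearMap.id (∑ i, u i ⊗ₜ[k] v i) -
        TensorProduct.map LinearMap.id (LinearMap.mulRight k a) (∑ i, u i ⊗ₜ[k] v i)) :
    (∀ a, TensorProduct.map D LinearMap.id (D a) -
        (TensorProduct.assoc k A A A).symm (TensorProduct.map LinearMap.id D (D a))
      = TensorProduct.map (TensorProduct.map (LinearMap.mulLeft k a) LinearMap.id)
            LinearMap.id
            ((∑ i, ∑ j, ((u i * u j) ⊗ₜ[k] v j) ⊗ₜ[k] v i)
              - (∑ i, ∑ j, (u i ⊗ₜ[k] (v i * u j)) ⊗ₜ[k] v j)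
              + (∑ i, ∑ j, (u i ⊗ₜ[k] u j) ⊗ₜ[k] (v j * v i)))
        - TensorProduct.map LinearMap.id (LinearMap.mulRight k a)
            ((∑ i, ∑ j, ((u i * u j) ⊗ₜ[k] v j) ⊗ₜ[k] v i)
              - (∑ i, ∑ j, (u i ⊗ₜ[k] (v i * u j)) ⊗ₜ[k] v j)
              + (∑ i, ∑ j, (u i ⊗ₜ[k] u j) ⊗ₜ[k] (v j * v i))))
    ∧
    ((∀ a, TensorProduct.map D LinearMap.id (D a) =
        (TensorProduct.assoc k A A A).symm (TensorProduct.map LinearMap.id D (D a))) ↔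
      (∀ a, TensorProduct.map (TensorProduct.map (LinearMap.mulLeft k a) LinearMap.id)
            LinearMap.id
            ((∑ i, ∑ j, ((u i * u j) ⊗ₜ[k] v j) ⊗ₜ[k] v i)
              - (∑ i, ∑ j, (u i ⊗ₜ[k] (v i * u j)) ⊗ₜ[k] v j)
              + (∑ i, ∑ j, (u i ⊗ₜ[k] u j) ⊗ₜ[k] (v j * v i)))
        = TensorProduct.map LinearMap.id (LinearMap.mulRight k a)
            ((∑ i, ∑ j, ((u i * u j) ⊗ₜ[k] v j) ⊗ₜ[k] v i)
              - (∑ i, ∑ j, (u i ⊗ₜ[k] (v i * u j)) ⊗ₜ[k] v j)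
              + (∑ i, ∑ j, (u i ⊗ₜ[k] u j) ⊗ₜ[k] (v j * v i))))) := by
  have key : ∀ a, TensorProduct.map D LinearMap.id (D a) -
        (TensorProduct.assoc k A A A).symm (TensorProduct.map LinearMap.id D (D a))
      = TensorProduct.map (TensorProduct.map (LinearMap.mulLeft k a) LinearMap.id)
            LinearMap.id
            ((∑ i, ∑ j, ((u i * u j) ⊗ₜ[k] v j) ⊗ₜ[k] v i)
              - (∑ i, ∑ j, (u i ⊗ₜ[k] (v i * u j)) ⊗ₜ[k] v j)
              + (∑ i, ∑ j, (u i ⊗ₜ[k] u j) ⊗ₜ[k] (v j * v i)))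
        - TensorProduct.map LinearMap.id (LinearMap.mulRight k a)
            ((∑ i, ∑ j, ((u i * u j) ⊗ₜ[k] v j) ⊗ₜ[k] v i)
              - (∑ i, ∑ j, (u i ⊗ₜ[k] (v i * u j)) ⊗ₜ[k] v j)
              + (∑ i, ∑ j, (u i ⊗ₜ[k] u j) ⊗ₜ[k] (v j * v i))) := by
    intro a
    simp only [hD, map_sub, map_sum, map_add, TensorProduct.map_tmul,
      LinearMap.mulLeft_apply, LinearMap.mulRight_apply, LinearMap.id_coe, id_eq,
      TensorProduct.assoc_symm_tmul, TensorProduct.sum_tmul, TensorProduct.tmul_sum,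
      TensorProduct.sub_tmul, TensorProduct.tmul_sub, mul_assoc]
    simp only [Finset.sum_sub_distrib]
    rw [show (∑ x : ι, ∑ y : ι, (u y ⊗ₜ[k] (v y * (a * u x))) ⊗ₜ[k] v x)
        = ∑ x : ι, ∑ y : ι, (u x ⊗ₜ[k] (v x * (a * u y))) ⊗ₜ[k] v y from
      Finset.sum_comm ..,
      show (∑ x : ι, ∑ y : ι, (u y ⊗ₜ[k] (v y * u x)) ⊗ₜ[k] (v x * a))
        = ∑ x : ι, ∑ y : ι, (u x ⊗ₜ[k] (v x * u y)) ⊗ₜ[k] (v y * a) from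
      Finset.sum_comm ..]
    abel
  refine ⟨key, ?_⟩
  constructor
  · intro h a
    have hk := key a
    rw [h a, sub_self] at hk
    exact sub_eq_zero.mp hk.symm
  · intro h a
    have hk := key a
    rw [h a, sub_self] at hk
    exact sub_eq_zero.mp hk
end

section
/- For the algebra A = span{e₁, e₂} with e₁e₁ = e₁e₂ = 0, e₂e₁ = e₁, e₂e₂ = e₂ and r = e₂⊗e₁ − e₁⊗e₂, the coboundary comultiplication Δ_r(a) = a·r − r·a satisfies Δ_r(e₁) = e₁⊗e₁ and Δ_r(e₂) = e₂⊗e₁, and Δ_r is coassociative. -/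
open TensorProduct

/-- The multiplication of the algebra `e₁e₁ = e₁e₂ = 0`, `e₂e₁ = e₁`, `e₂e₂ = e₂`
on `k × k`, with `e₁ = (1,0)`, `e₂ = (0,1)`. -/
def mulA {k : Type*} [Field k] (p q : k × k) : k × k := (p.2 * q.1, p.2 * q.2)

/-- Left multiplication `x ↦ a·x` as a linear map. -/
def mulLa {k : Type*} [Field k] (a : k × k) : (k × k) →ₗ[k] (k × k) :=
  a.2 • LinearMap.id

/-- Right multiplication `x ↦ x·a` as a linear map. -/
def mulRa {k : Type*} [Field k] (a : k × k) : (k × k) →ₗ[k] (k × k) :=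
  (LinearMap.snd k k k).smulRight a

/-- `r = e₂⊗e₁ − e₁⊗e₂`. -/
noncomputable def rA (k : Type*) [Field k] : (k × k) ⊗[k] (k × k) :=
  ((0 : k), (1 : k)) ⊗ₜ[k] ((1 : k), (0 : k)) - ((1 : k), (0 : k)) ⊗ₜ[k] ((0 : k), (1 : k))

/-- The linear maps `mulLa`/`mulRa` really are multiplication by `a`, and the coboundary
comultiplication `Δ_r(a) = a·r − r·a` satisfies `Δ_r(e₁) = e₁⊗e₁`, `Δ_r(e₂) = e₂⊗e₁`,
and is coassociative. -/
theorem example_coboundary_comul (k : Type*) [Field k]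
    (D : (k × k) →ₗ[k] (k × k) ⊗[k] (k × k))
    (hD : ∀ a, D a = TensorProduct.map (mulLa a) LinearMap.id (rA k) -
      TensorProduct.map LinearMap.id (mulRa a) (rA k)) :
    (∀ a x : k × k, mulLa a x = mulA a x ∧ mulRa a x = mulA x a) ∧
    D ((1 : k), (0 : k)) = ((1 : k), (0 : k)) ⊗ₜ[k] ((1 : k), (0 : k)) ∧
    D ((0 : k), (1 : k)) = ((0 : k), (1 : k)) ⊗ₜ[k] ((1 : k), (0 : k)) ∧
    (∀ a, TensorProduct.map D LinearMap.id (D a) =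
      (TensorProduct.assoc k (k × k) (k × k) (k × k)).symm
        (TensorProduct.map LinearMap.id D (D a))) := by
  have key : ∀ a : k × k, D a = a ⊗ₜ[k] ((1 : k), (0 : k)) := by
    rintro ⟨x, y⟩
    rw [hD]
    unfold rA mulLa mulRa
    simp only [map_sub, TensorProduct.map_tmul, LinearMap.smul_apply, LinearMap.id_coe,
      id_eq, LinearMap.smulRight_apply, LinearMap.snd_apply, zero_smul, one_smul, tmul_zero]
    have ha : ((x, y) : k × k) = x • ((1 : k), (0 : k)) + y • ((0 : k), (1 : k)) := by
      simp
    rw [ha]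
    simp only [tmul_add, add_tmul, tmul_smul, ← smul_tmul']
    module
  refine ⟨?_, ?_, ?_, ?_⟩
  · intro a x
    constructor
    · simp [mulLa, mulA, Prod.ext_iff, mul_comm]
    · simp [mulRa, mulA, Prod.ext_iff, mul_comm]
  · rw [key]
  · rw [key]
  · intro a
    rw [key, TensorProduct.map_tmul, TensorProduct.map_tmul, key, key,
      TensorProduct.assoc_symm_tmul]
    rfl
end
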